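/- Let d ≥ 1, M ≥ 1, and let p_1, …, p_M be points in ℝ^d (Euclidean space). Then there exist unit vectors v_1, …, v_M in EuclideanSpace ℝ (Fin M) such that ⟨v_i, v_j⟩ = exp(−‖p_i − p_j‖²) for all i, j; in other words, there is a set of unit norm vectors whose pairwise Bhattacharyya distances −log⟨v_i, v_j⟩ are precisely the squared Euclidean distances ‖p_i − p_j‖² between the original points. -/

import Mathlib

open Finset in
lemma gram_pow_nonneg {m n : ℕ} (q : Fin m → Fin n → ℝ) (c : Fin m → ℝ) (k : ℕ) :
    0 ≤ ∑ i, ∑ j, c i * c j * (∑ x, q i x * q j x) ^ k := by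
  have expand : ∀ i j : Fin m, (∑ x, q i x * q j x) ^ k
      = ∑ g : Fin k → Fin n, (∏ l, q i (g l)) * (∏ l, q j (g l)) := by
    intro i j
    calc (∑ x, q i x * q j x) ^ k = ∏ _l : Fin k, (∑ x, q i x * q j x) := by
          rw [Finset.prod_const, Finset.card_univ, Fintype.card_fin]
      _ = ∑ g ∈ Fintype.piFinset (fun _ : Fin k => (univ : Finset (Fin n))),
            ∏ l, (q i (g l) * q j (g l)) := Finset.prod_univ_sum _ _
      _ = ∑ g : Fin k → Fin n, (∏ l, q i (g l)) * (∏ l, q j (g l)) := by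
          rw [Fintype.piFinset_univ]
          exact Finset.sum_congr rfl fun g _ => Finset.prod_mul_distrib
  have key : ∑ i, ∑ j, c i * c j * (∑ x, q i x * q j x) ^ k
      = ∑ g : Fin k → Fin n, (∑ i, c i * ∏ l, q i (g l)) ^ 2 :=
    calc ∑ i, ∑ j, c i * c j * (∑ x, q i x * q j x) ^ k
        = ∑ i, ∑ j, ∑ g : Fin k → Fin n,
            (c i * ∏ l, q i (g l)) * (c j * ∏ l, q j (g l)) := by
          refine Finset.sum_congr rfl fun i _ => Finset.sum_congr rfl fun j _ => ?_
          rw [expand, Finset.mul_sum]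
          exact Finset.sum_congr rfl fun g _ => by ring
      _ = ∑ i, ∑ g : Fin k → Fin n, ∑ j,
            (c i * ∏ l, q i (g l)) * (c j * ∏ l, q j (g l)) :=
          Finset.sum_congr rfl fun i _ => Finset.sum_comm
      _ = ∑ g : Fin k → Fin n, ∑ i, ∑ j,
            (c i * ∏ l, q i (g l)) * (c j * ∏ l, q j (g l)) := Finset.sum_comm
      _ = ∑ g : Fin k → Fin n, (∑ i, c i * ∏ l, q i (g l)) ^ 2 := by
          refine Finset.sum_congr rfl fun g _ => ?_
          rw [sq, Finset.sum_mul_sum]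
  rw [key]
  exact Finset.sum_nonneg fun g _ => sq_nonneg _

lemma exp_gram_nonneg {m n : ℕ} (q : Fin m → Fin n → ℝ) (c : Fin m → ℝ) :
    0 ≤ ∑ i, ∑ j, c i * c j * Real.exp (2 * ∑ x, q i x * q j x) := by
  have hexp : ∀ y : ℝ, Real.exp y = ∑' k : ℕ, y ^ k / (Nat.factorial k : ℝ) := by
    intro y; rw [Real.exp_eq_exp_ℝ, NormedSpace.exp_eq_tsum_div]
  have hsummable : ∀ i j : Fin m, Summable (fun k : ℕ =>
      c i * c j * ((2 * ∑ x, q i x * q j x) ^ k / (Nat.factorial k : ℝ))) := fun i j =>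
    Summable.mul_left _ (Real.summable_pow_div_factorial _)
  have step : ∑ i, ∑ j, c i * c j * Real.exp (2 * ∑ x, q i x * q j x)
      = ∑' k : ℕ, ∑ i, ∑ j,
          c i * c j * ((2 * ∑ x, q i x * q j x) ^ k / (Nat.factorial k : ℝ)) := by
    rw [Summable.tsum_finsetSum (fun i _ => summable_sum (fun j _ => hsummable i j))]
    refine Finset.sum_congr rfl fun i _ => ?_
    rw [Summable.tsum_finsetSum (fun j _ => hsummable i j)]
    refine Finset.sum_congr rfl fun j _ => ?_
    rw [hexp, tsum_mul_left]
  rw [step]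
  refine tsum_nonneg fun k => ?_
  have h2 : ∀ i j : Fin m, c i * c j * ((2 * ∑ x, q i x * q j x) ^ k / (Nat.factorial k : ℝ))
      = (2 ^ k / (Nat.factorial k : ℝ)) * (c i * c j * (∑ x, q i x * q j x) ^ k) := by
    intro i j; rw [mul_pow]; ring
  simp_rw [h2, ← Finset.mul_sum]
  exact mul_nonneg (by positivity) (gram_pow_nonneg q c k)


/-- For any points `p₁, …, p_M` in Euclidean space there are unit vectors
`v₁, …, v_M ∈ ℝ^M` with `⟨vᵢ, vⱼ⟩ = exp(−‖pᵢ − pⱼ‖²)`, i.e. whose pairwise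
Bhattacharyya distances `−log⟨vᵢ, vⱼ⟩` are the squared Euclidean distances. -/
theorem stmt14 (d M : ℕ) (hd : 1 ≤ d) (hM : 1 ≤ M)
    (p : Fin M → EuclideanSpace ℝ (Fin d)) :
    ∃ v : Fin M → EuclideanSpace ℝ (Fin M),
      (∀ i, ‖v i‖ = 1) ∧
      ∀ i j, (inner ℝ (v i) (v j) : ℝ) = Real.exp (-‖p i - p j‖ ^ 2) := by
  set G : Matrix (Fin M) (Fin M) ℝ :=
    Matrix.of fun i j => Real.exp (-‖p i - p j‖ ^ 2) with hGdef
  have hdec : ∀ i j, Real.exp (-‖p i - p j‖ ^ 2)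
      = Real.exp (-‖p i‖ ^ 2) * Real.exp (-‖p j‖ ^ 2)
        * Real.exp (2 * ∑ x, p i x * p j x) := by
    intro i j
    rw [← Real.exp_add, ← Real.exp_add]
    congr 1
    have h1 : ‖p i - p j‖ ^ 2 = ‖p i‖ ^ 2 - 2 * inner ℝ (p i) (p j) + ‖p j‖ ^ 2 :=
      norm_sub_sq_real (p i) (p j)
    have h2 : (inner ℝ (p i) (p j) : ℝ) = ∑ x, p i x * p j x := by
      simp [PiLp.inner_apply, RCLike.inner_apply, conj_trivial]
      exact Finset.sum_congr rfl fun _ _ => mul_comm _ _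
    rw [h2] at h1
    linarith
  have hG : G.PosSemidef := by
    refine Matrix.PosSemidef.of_dotProduct_mulVec_nonneg ?_ ?_
    · ext i j
      simp only [Matrix.conjTranspose_apply, hGdef, Matrix.of_apply, star_trivial]
      rw [norm_sub_rev]
    · intro x
      have hform : dotProduct (star x) (G.mulVec x)
          = ∑ i, ∑ j, (x i * Real.exp (-‖p i‖ ^ 2)) * (x j * Real.exp (-‖p j‖ ^ 2))
              * Real.exp (2 * ∑ y, p i y * p j y) := by
        simp only [star_trivial, dotProduct, Matrix.mulVec, hGdef, Matrix.of_apply]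
        refine Finset.sum_congr rfl fun i _ => ?_
        rw [Finset.mul_sum]
        refine Finset.sum_congr rfl fun j _ => ?_
        rw [hdec i j]; ring
      rw [hform]
      exact exp_gram_nonneg (fun i y => p i y) (fun i => x i * Real.exp (-‖p i‖ ^ 2))
  set S := (open scoped MatrixOrder in CFC.sqrt G) with hSdef
  have hSh : S.IsHermitian := by open scoped MatrixOrder in exact (by simpa using (CFC.sqrt_nonneg G).1)
  have hSS : S * S = G := by open scoped MatrixOrder in exact CFC.sqrt_mul_sqrt_self G hG.nonneg
  set V : Fin M → EuclideanSpace ℝ (Fin M) :=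
    fun i => (WithLp.equiv 2 (Fin M → ℝ)).symm (fun x => S x i) with hV
  have hIP : ∀ i j, (inner ℝ (V i) (V j) : ℝ) = Real.exp (-‖p i - p j‖ ^ 2) := by
    intro i j
    have h1 : (inner ℝ (V i) (V j) : ℝ) = ∑ x, S x i * S x j := by
      simp [hV, PiLp.inner_apply, RCLike.inner_apply, conj_trivial]
      exact Finset.sum_congr rfl fun _ _ => mul_comm _ _
    rw [h1]
    have h2 : ∑ x, S x i * S x j = (S * S) i j := by
      rw [Matrix.mul_apply]
      refine Finset.sum_congr rfl fun x _ => ?_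
      have hsym : S i x = S x i := by
        conv_lhs => rw [← hSh]
        simp [Matrix.conjTranspose_apply]
      rw [hsym]
    rw [h2, hSS]
    rfl
  refine ⟨V, fun i => ?_, hIP⟩
  have h1 : ‖V i‖ ^ 2 = 1 := by
    rw [← real_inner_self_eq_norm_sq, hIP]
    simp
  nlinarith [norm_nonneg (V i)]
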